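/- Let g ≥ 2 and ℓ ≥ 3 be integers. Let π be the genus-g surface group, i.e., the group with presentation ⟨a_1, b_1, …, a_g, b_g | [a_1,b_1][a_2,b_2]⋯[a_g,b_g] = 1⟩. Let K be the kernel of the natural homomorphism from π to its mod-ℓ abelianization (the composition of the abelianization map π → π^{ab} ≅ ℤ^{2g} with reduction modulo ℓ, landing in (ℤ/ℓ)^{2g}). Let P be the subgroup of π generated by {x^ℓ : x ∈ π}. Then P ⊆ K, and the image of P under the abelianization map K → K^{ab} = K/[K,K] is a proper subgroup of K^{ab}. -/

import Mathlib

open scoped commutatorElement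

/-- The single surface relation `[a₁,b₁][a₂,b₂]⋯[a_g,b_g]` in the free group on the `2g`
generators `a_i = (i, true)` and `b_i = (i, false)`. -/
abbrev surfaceRels (g : ℕ) : Set (FreeGroup (Fin g × Bool)) :=
  {(List.ofFn fun i : Fin g =>
      ⁅FreeGroup.of ((i, true) : Fin g × Bool), FreeGroup.of ((i, false) : Fin g × Bool)⁆).prod}

/-- The genus-`g` surface group `⟨a₁,b₁,…,a_g,b_g ∣ [a₁,b₁]⋯[a_g,b_g]⟩`. -/
abbrev SurfaceGroup (g : ℕ) : Type := PresentedGroup (surfaceRels g)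

/-- The generator `a_i` of the surface group. -/
abbrev SurfaceGroup.a {g : ℕ} (i : Fin g) : SurfaceGroup g := PresentedGroup.of (i, true)

/-- The generator `b_i` of the surface group. -/
abbrev SurfaceGroup.b {g : ℕ} (i : Fin g) : SurfaceGroup g := PresentedGroup.of (i, false)

/-- The subgroup of `ℓ`-th powers of the abelianization of the surface group. -/
abbrev abPowers (g l : ℕ) : Subgroup (Abelianization (SurfaceGroup g)) :=
  Subgroup.closure {x : Abelianization (SurfaceGroup g) |
    ∃ a : Abelianization (SurfaceGroup g), x = a ^ l}

/-- The natural homomorphism from the genus-`g` surface group to its mod-`ℓ`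
abelianization, i.e. the composition of the abelianization map with the reduction of the
abelianization modulo `ℓ`-th powers. -/
abbrev modLAb (g l : ℕ) :
    SurfaceGroup g →* Abelianization (SurfaceGroup g) ⧸ abPowers g l :=
  (QuotientGroup.mk' (abPowers g l)).comp Abelianization.of

@[ext]
structure Heis (R : Type) where
  a : R
  b : R
  c : R

namespace Heis
variable {R : Type} [CommRing R]

instance : Mul (Heis R) := ⟨fun x y => ⟨x.a + y.a, x.b + y.b, x.c + y.c + x.a * y.b⟩⟩
instance : One (Heis R) := ⟨⟨0, 0, 0⟩⟩
instance : Inv (Heis R) := ⟨fun x => ⟨-x.a, -x.b, -x.c + x.a * x.b⟩⟩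

@[simp] lemma mul_a (x y : Heis R) : (x * y).a = x.a + y.a := rfl
@[simp] lemma mul_b (x y : Heis R) : (x * y).b = x.b + y.b := rfl
@[simp] lemma mul_c (x y : Heis R) : (x * y).c = x.c + y.c + x.a * y.b := rfl
@[simp] lemma one_a : (1 : Heis R).a = 0 := rfl
@[simp] lemma one_b : (1 : Heis R).b = 0 := rfl
@[simp] lemma one_c : (1 : Heis R).c = 0 := rfl
@[simp] lemma inv_a (x : Heis R) : (x⁻¹).a = -x.a := rfl
@[simp] lemma inv_b (x : Heis R) : (x⁻¹).b = -x.b := rfl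
@[simp] lemma inv_c (x : Heis R) : (x⁻¹).c = -x.c + x.a * x.b := rfl

instance : Group (Heis R) where
  mul_assoc x y z := by ext <;> simp <;> ring
  one_mul x := by ext <;> simp
  mul_one x := by ext <;> simp
  inv_mul_cancel x := by ext <;> simp

@[simp] lemma pow_a (x : Heis R) (n : ℕ) : (x ^ n).a = n * x.a := by
  induction n with
  | zero => simp
  | succ n ih => simp [pow_succ, ih]; ring

@[simp] lemma pow_b (x : Heis R) (n : ℕ) : (x ^ n).b = n * x.b := by
  induction n with
  | zero => simp
  | succ n ih => simp [pow_succ, ih]; ring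

lemma pow_c2 (x : Heis R) (n : ℕ) :
    2 * (x ^ n).c = 2 * n * x.c + n * (n - 1 : R) * (x.a * x.b) := by
  induction n with
  | zero => simp
  | succ n ih =>
    simp only [pow_succ, mul_c, Nat.cast_succ, pow_a]
    linear_combination ih

lemma comm_abc : ⁅(⟨1,0,0⟩ : Heis R), (⟨0,1,0⟩ : Heis R)⁆ = ⟨0,0,1⟩ := by
  ext <;> simp [commutatorElement_def] <;> ring

/-- The homomorphism to the abelianization `R × R`. -/
def ab : Heis R →* Multiplicative (R × R) where
  toFun x := Multiplicative.ofAdd (x.a, x.b)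
  map_one' := rfl
  map_mul' x y := rfl

@[simp] lemma ab_apply (x : Heis R) : ab x = Multiplicative.ofAdd (x.a, x.b) := rfl

/-- The "kernel of ab" subgroup. -/
def Z : Subgroup (Heis R) where
  carrier := {x | x.a = 0 ∧ x.b = 0}
  one_mem' := ⟨rfl, rfl⟩
  mul_mem' := by rintro x y ⟨h1, h2⟩ ⟨h3, h4⟩; exact ⟨by simp [h1, h3], by simp [h2, h4]⟩
  inv_mem' := by rintro x ⟨h1, h2⟩; exact ⟨by simp [h1], by simp [h2]⟩

/-- The `c`-coordinate as a homomorphism on `Z`. -/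
def cHom : (Z (R := R)) →* Multiplicative R where
  toFun x := Multiplicative.ofAdd x.1.c
  map_one' := rfl
  map_mul' x y := by
    have := x.2.1
    simp only [Subgroup.coe_mul, mul_c, this, zero_mul, add_zero]
    rfl

@[simp] lemma cHom_apply (x : (Z (R := R))) : cHom x = Multiplicative.ofAdd x.1.c := rfl

end Heis

section Main

variable (m l : ℕ)

/-- generators for the map to the Heisenberg group -/
def fgen : Fin (m + 2) × Bool → Heis (ZMod l) := fun x =>
  if x.1.val = 0 then (if x.2 then ⟨1,0,0⟩ else ⟨0,1,0⟩)
  else if x.1.val = 1 then (if x.2 then ⟨0,1,0⟩ else ⟨1,0,0⟩)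
  else 1

lemma fgen_rel : ∀ r ∈ surfaceRels (m + 2), FreeGroup.lift (fgen m l) r = 1 := by
  intro r hr
  rcases hr with rfl
  rw [map_list_prod, List.map_ofFn]
  have hfn : (⇑(FreeGroup.lift (fgen m l)) ∘ fun i : Fin (m+2) =>
        ⁅FreeGroup.of ((i, true) : Fin (m+2) × Bool), FreeGroup.of ((i, false) : Fin (m+2) × Bool)⁆)
      = fun i : Fin (m+2) => ⁅fgen m l (i, true), fgen m l (i, false)⁆ := by
    funext i; simp [map_commutatorElement]
  rw [hfn, List.ofFn_succ, List.ofFn_succ, List.prod_cons, List.prod_cons]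
  have h0t : fgen m l (0, true) = ⟨1,0,0⟩ := rfl
  have h0f : fgen m l (0, false) = ⟨0,1,0⟩ := rfl
  have h1t : fgen m l ((0 : Fin (m+1)).succ, true) = ⟨0,1,0⟩ := by
    simp [fgen, Fin.val_succ]
  have h1f : fgen m l ((0 : Fin (m+1)).succ, false) = ⟨1,0,0⟩ := by
    simp [fgen, Fin.val_succ]
  have hrest : (List.ofFn fun i : Fin m =>
      ⁅fgen m l (i.succ.succ, true), fgen m l (i.succ.succ, false)⁆).prod = 1 := by
    apply List.prod_eq_one
    intro x hx
    rw [List.mem_ofFn] at hx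
    obtain ⟨i, rfl⟩ := hx
    have ht : fgen m l (i.succ.succ, true) = 1 := by
      simp [fgen, Fin.val_succ]
    have hf : fgen m l (i.succ.succ, false) = 1 := by
      simp [fgen, Fin.val_succ]
    beta_reduce
    rw [ht, hf]
    simp [commutatorElement]
  rw [h0t, h0f, h1t, h1f, hrest, mul_one, ← commutatorElement_inv, inv_mul_cancel]

/-- The homomorphism from the surface group to the Heisenberg group. -/
def Phi : SurfaceGroup (m + 2) →* Heis (ZMod l) := PresentedGroup.toGroup (fgen_rel m l)

/-- Any element of the kernel of `modLAb` lands in `Heis.Z`. -/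
lemma Phi_mem_Z {k : SurfaceGroup (m + 2)} (hk : k ∈ (modLAb (m + 2) l).ker) :
    Phi m l k ∈ Heis.Z (R := ZMod l) := by
  -- build the factorization through the mod-l abelianization
  set θ : SurfaceGroup (m + 2) →* Multiplicative (ZMod l × ZMod l) :=
    (Heis.ab).comp (Phi m l) with hθ
  have hexp : ∀ v : Multiplicative (ZMod l × ZMod l), v ^ l = 1 := by
    intro v
    rw [← ofAdd_toAdd v, ← ofAdd_nsmul]
    have : l • (Multiplicative.toAdd v) = 0 := by
      ext
      · simp [nsmul_eq_mul, ZMod.natCast_self]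
      · simp [nsmul_eq_mul, ZMod.natCast_self]
    rw [this]; rfl
  set h₁ : Abelianization (SurfaceGroup (m + 2)) →* Multiplicative (ZMod l × ZMod l) :=
    Abelianization.lift θ with hh₁
  have hker : abPowers (m + 2) l ≤ h₁.ker := by
    rw [Subgroup.closure_le]
    rintro x ⟨a, rfl⟩
    simp only [SetLike.mem_coe, MonoidHom.mem_ker, map_pow, hexp]
  set h₂ := QuotientGroup.lift (abPowers (m + 2) l) h₁ hker with hh₂
  have hfact : ∀ x : SurfaceGroup (m + 2), h₂ (modLAb (m + 2) l x) = θ x := by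
    intro x
    simp [hh₂, hh₁, modLAb]
  have h1 : θ k = 1 := by
    rw [← hfact k, MonoidHom.mem_ker.mp hk, map_one]
  have : (Phi m l k).a = 0 ∧ (Phi m l k).b = 0 := by
    have := congrArg Multiplicative.toAdd h1
    simpa [hθ, Prod.ext_iff] using this
  exact this

end Main

/-- Let `g ≥ 2`, `ℓ ≥ 3`, let `π` be the genus-`g` surface group, `K` the kernel of the
natural map from `π` to its mod-`ℓ` abelianization, and `P` the subgroup of `π` generated
by all `ℓ`-th powers.  Then `P ⊆ K` and the image of `P` in the abelianization `K^{ab}`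
of `K` is a proper subgroup. -/
theorem surfaceGroup_powers_proper_in_kernel_abelianization
    (g l : ℕ) (hg : 2 ≤ g) (hl : 3 ≤ l)
    (K : Subgroup (SurfaceGroup g)) (hK : K = (modLAb g l).ker)
    (P : Subgroup (SurfaceGroup g))
    (hP : P = Subgroup.closure {x : SurfaceGroup g | ∃ u : SurfaceGroup g, x = u ^ l}) :
    P ≤ K ∧
      Subgroup.map (Abelianization.of (G := K)) (P.subgroupOf K) ≠ ⊤ := by
  obtain ⟨m, rfl⟩ : ∃ m, g = m + 2 := ⟨g - 2, by omega⟩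
  subst hK hP
  constructor
  · rw [Subgroup.closure_le]
    rintro x ⟨u, rfl⟩
    simp only [SetLike.mem_coe, MonoidHom.mem_ker, map_pow]
    show (QuotientGroup.mk' (abPowers (m+2) l)) (Abelianization.of u) ^ l = 1
    rw [← map_pow, QuotientGroup.mk'_apply, QuotientGroup.eq_one_iff]
    exact Subgroup.subset_closure ⟨Abelianization.of u, rfl⟩
  · intro htop
    set K := (modLAb (m + 2) l).ker with hK
    set P := Subgroup.closure {x : SurfaceGroup (m+2) | ∃ u : SurfaceGroup (m+2), x = u ^ l} with hP
    -- the homomorphism ψ : K →* Multiplicative (ZMod l)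
    set ΦK : K →* (Heis.Z (R := ZMod l)) :=
      MonoidHom.codRestrict ((Phi m l).comp K.subtype) _
        (fun k => Phi_mem_Z m l k.2) with hΦK
    set ψ : K →* Multiplicative (ZMod l) := Heis.cHom.comp ΦK with hψ
    set ψ' := Abelianization.lift ψ with hψ'
    -- the element k₀ = [a₀, b₀]
    have hk₀K : ⁅SurfaceGroup.a (0 : Fin (m+2)), SurfaceGroup.b (0 : Fin (m+2))⁆ ∈ K := by
      rw [MonoidHom.mem_ker, map_commutatorElement]
      exact commutatorElement_eq_one_iff_commute.mpr (mul_comm _ _)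
    set k₀ : K := ⟨_, hk₀K⟩ with hk₀
    -- extract p
    have : Abelianization.of k₀ ∈ Subgroup.map (Abelianization.of (G := K)) (P.subgroupOf K) := by
      rw [htop]; trivial
    obtain ⟨p, hpP, hpe⟩ := this
    have hψeq : ψ p = ψ k₀ := by
      have := congrArg ψ' hpe
      simpa [hψ'] using this
    -- compute ψ k₀ = 1 (i.e. ofAdd 1)
    have hΦk₀ : Phi m l (k₀ : SurfaceGroup (m+2)) = ⟨0, 0, 1⟩ := by
      show Phi m l ⁅SurfaceGroup.a (0 : Fin (m+2)), SurfaceGroup.b (0 : Fin (m+2))⁆ = _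
      rw [map_commutatorElement]
      have ha : Phi m l (SurfaceGroup.a (0 : Fin (m+2))) = ⟨1, 0, 0⟩ :=
        PresentedGroup.toGroup.of _
      have hb : Phi m l (SurfaceGroup.b (0 : Fin (m+2))) = ⟨0, 1, 0⟩ :=
        PresentedGroup.toGroup.of _
      rw [ha, hb, Heis.comm_abc]
    have hψk₀ : ψ k₀ = Multiplicative.ofAdd (1 : ZMod l) := by
      simp only [hψ, MonoidHom.comp_apply, Heis.cHom_apply]
      congr 1
      show ((Phi m l).comp K.subtype k₀).c = 1
      simp only [MonoidHom.comp_apply, Subgroup.coe_subtype]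
      rw [hΦk₀]
    -- P lands in the "2c = 0" subgroup
    set M : Subgroup (Heis (ZMod l)) :=
      { carrier := {x | x.a = 0 ∧ x.b = 0 ∧ 2 * x.c = 0}
        one_mem' := ⟨rfl, rfl, by simp⟩
        mul_mem' := by
          rintro x y ⟨h1, h2, h3⟩ ⟨h4, h5, h6⟩
          refine ⟨by simp [h1, h4], by simp [h2, h5], ?_⟩
          simp only [Heis.mul_c, h1, zero_mul, add_zero, mul_add, h3, h6]
          try simp
        inv_mem' := by
          rintro x ⟨h1, h2, h3⟩
          refine ⟨by simp [h1], by simp [h2], ?_⟩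
          simp only [Heis.inv_c, h1, zero_mul, mul_add, mul_neg, h3]
          try simp } with hM
    have hPM : P ≤ Subgroup.comap (Phi m l) M := by
      rw [hP, Subgroup.closure_le]
      rintro x ⟨u, rfl⟩
      simp only [SetLike.mem_coe, Subgroup.mem_comap, map_pow]
      refine ⟨by simp [ZMod.natCast_self], by simp [ZMod.natCast_self], ?_⟩
      rw [Heis.pow_c2]
      simp [ZMod.natCast_self]
    have hpM : Phi m l (p : SurfaceGroup (m+2)) ∈ M := hPM hpP
    have h2c : 2 * (Phi m l (p : SurfaceGroup (m+2))).c = 0 := hpM.2.2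
    have hψp : ψ p = Multiplicative.ofAdd ((Phi m l (p : SurfaceGroup (m+2))).c) := rfl
    rw [hψp, hψk₀] at hψeq
    have : (Phi m l (p : SurfaceGroup (m+2))).c = 1 := by
      exact_mod_cast congrArg Multiplicative.toAdd hψeq
    rw [this, mul_one] at h2c
    have : (l : ℕ) ∣ 2 := by
      have := (ZMod.natCast_eq_zero_iff 2 l).mp (by exact_mod_cast h2c)
      exact this
    have := Nat.le_of_dvd (by norm_num) this
    omega
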